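/- Fix d > 1, and let f, g : ℝ → [0,1] be measurable non-increasing solutions of the un-truncated cavity equation. Then there exists t ≥ 0 such that for all x ∈ ℝ, f(x + t) ≤ g(x) ≤ f(x - t). -/

import Mathlib

open MeasureTheory Set Filter

/-- The truncated cavity operator `T`. -/
noncomputable def T (d lam : ℝ) (f : ℝ → ℝ) : ℝ → ℝ :=
  fun x => Real.exp (-(d * ∫ y in (-x)..lam, (x + y) ^ (d - 1) * f y))

/-- `f` is the fixed point of the truncated cavity operator on `[-λ, λ]`
(non-increasing and `[0,1]`-valued there), extended to `ℝ` by `1` on `(-∞, -λ]`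
and `0` on `(λ, ∞)`. -/
def ExtFixedPoint (d lam : ℝ) (f : ℝ → ℝ) : Prop :=
  AntitoneOn f (Icc (-lam) lam) ∧
  (∀ x ∈ Icc (-lam) lam, f x ∈ Icc (0 : ℝ) 1) ∧
  (∀ x ≤ -lam, f x = 1) ∧ (∀ x > lam, f x = 0) ∧
  (∀ x ∈ Icc (-lam) lam, T d lam f x = f x)

/-- `f : ℝ → [0,1]` is a measurable solution of the un-truncated Mézard–Parisi
cavity equation `f(x) = exp(-d ∫_{-x}^∞ (x+y)^{d-1} f(y) dy)`, the integrals
being (finite and) well-defined. -/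
def SolvesCavity (d : ℝ) (f : ℝ → ℝ) : Prop :=
  Measurable f ∧ (∀ x : ℝ, f x ∈ Icc (0 : ℝ) 1) ∧
  (∀ x : ℝ, IntegrableOn (fun y => (x + y) ^ (d - 1) * f y) (Ioi (-x))) ∧
  (∀ x : ℝ, f x = Real.exp (-(d * ∫ y in Ioi (-x), (x + y) ^ (d - 1) * f y)))


namespace CavityAux

lemma shift_setIntegral (h : ℝ → ℝ) (a c : ℝ) :
    ∫ y in Ioi a, h (y + c) = ∫ y in Ioi (a + c), h y := by
  have hpre : (fun y : ℝ => y + c) ⁻¹' (Ioi (a + c)) = Ioi a := by ext y; simp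
  rw [← (measurePreserving_add_right volume c).setIntegral_preimage_emb
    (measurableEmbedding_addRight c) h (Ioi (a + c)), hpre]

lemma shift_integrableOn {h : ℝ → ℝ} {a : ℝ} (c : ℝ) (hi : IntegrableOn h (Ioi (a + c))) :
    IntegrableOn (fun y => h (y + c)) (Ioi a) := by
  have hpre : (fun y : ℝ => y + c) ⁻¹' (Ioi (a + c)) = Ioi a := by ext y; simp
  have := ((measurePreserving_add_right volume c).integrableOn_comp_preimage
    (measurableEmbedding_addRight c) (f := h) (s := Ioi (a + c))).mpr hi
  rw [hpre] at this
  exact this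

lemma integral_Ioc_rpow {d : ℝ} (hd : 1 < d) {a b : ℝ} (hab : a ≤ b) :
    ∫ y in Ioc a b, (y - a) ^ (d - 1) = (b - a) ^ d / d := by
  rw [← intervalIntegral.integral_of_le hab,
    intervalIntegral.integral_comp_sub_right (fun u => u ^ (d - 1)) a,
    integral_rpow (Or.inl (by linarith)), sub_self, Real.zero_rpow (by linarith)]
  have h1 : d - 1 + 1 = d := by ring
  rw [h1, sub_zero]

end CavityAux

namespace CavityAux2
open CavityAux

variable {d : ℝ}

-- superadditivity of rpow for d >= 1
lemma rpow_superadd (hd : 1 ≤ d) {x t : ℝ} (hx : 0 ≤ x) (ht : 0 ≤ t) :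
    x ^ d + t ^ d ≤ (x + t) ^ d := by
  have h := NNReal.add_rpow_le_rpow_add (Real.toNNReal x) (Real.toNNReal t) hd
  have h2 := NNReal.coe_le_coe.mpr h
  push_cast [NNReal.coe_rpow, Real.coe_toNNReal x hx, Real.coe_toNNReal t ht] at h2
  convert h2 using 2

-- Bernoulli: (x+t)^d ≥ x^d + d*t*x^(d-1)
lemma rpow_bernoulli (hd : 1 < d) {x t : ℝ} (hx : 0 ≤ x) (ht : 0 ≤ t) :
    x ^ d + d * t * x ^ (d - 1) ≤ (x + t) ^ d := by
  rcases eq_or_lt_of_le hx with h0 | hxpos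
  · simp only [← h0]
    rw [Real.zero_rpow (by linarith : d ≠ 0), Real.zero_rpow (by linarith : d - 1 ≠ 0)]
    simp [Real.rpow_nonneg ht]
  · have h1 : (x + t) ^ d = x ^ d * (1 + t / x) ^ d := by
      rw [← Real.mul_rpow (le_of_lt hxpos) (by positivity)]
      congr 1
      field_simp
    rw [h1]
    have h2 : 1 + d * (t / x) ≤ (1 + t / x) ^ d := by
      apply one_add_mul_self_le_rpow_one_add _ (le_of_lt hd)
      have : (0:ℝ) ≤ t / x := by positivity
      linarith
    have h3 : x ^ d * (1 + d * (t / x)) ≤ x ^ d * (1 + t / x) ^ d :=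
      mul_le_mul_of_nonneg_left h2 (Real.rpow_nonneg hx _)
    calc x ^ d + d * t * x ^ (d - 1) = x ^ d * (1 + d * (t / x)) := by
          rw [Real.rpow_sub hxpos, Real.rpow_one]
          field_simp
      _ ≤ x ^ d * (1 + t / x) ^ d := h3

-- (x+t)^(d-1) ≤ 2^(d-1) * (x^(d-1) + t^(d-1))
lemma rpow_subadd_crude (hd : 1 < d) {x t : ℝ} (hx : 0 ≤ x) (ht : 0 ≤ t) :
    (x + t) ^ (d - 1) ≤ 2 ^ (d - 1) * (x ^ (d - 1) + t ^ (d - 1)) := by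
  have hp : (0:ℝ) ≤ d - 1 := by linarith
  have h1 : x + t ≤ 2 * max x t := by
    rcases le_total x t with h | h
    · simp [max_eq_right h]; linarith
    · simp [max_eq_left h]; linarith
  have h2 : (x + t) ^ (d - 1) ≤ (2 * max x t) ^ (d - 1) :=
    Real.rpow_le_rpow (by linarith) h1 hp
  have h3 : (2 * max x t) ^ (d - 1) = 2 ^ (d - 1) * (max x t) ^ (d - 1) :=
    Real.mul_rpow (by norm_num) (le_max_iff.mpr (Or.inl hx))
  have h4 : (max x t) ^ (d - 1) ≤ x ^ (d - 1) + t ^ (d - 1) := by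
    rcases le_total x t with h | h
    · rw [max_eq_right h]
      have := Real.rpow_nonneg hx (d - 1)
      linarith
    · rw [max_eq_left h]
      have := Real.rpow_nonneg ht (d - 1)
      linarith
  calc (x + t) ^ (d - 1) ≤ 2 ^ (d - 1) * (max x t) ^ (d - 1) := by rw [← h3]; exact h2
    _ ≤ 2 ^ (d - 1) * (x ^ (d - 1) + t ^ (d - 1)) := by
        apply mul_le_mul_of_nonneg_left h4 (Real.rpow_nonneg (by norm_num) _)

end CavityAux2

namespace CavitySol
open CavityAux CavityAux2

lemma continuous_rpow_shift {p c : ℝ} (hp : 0 ≤ p) : Continuous fun y : ℝ => (c + y) ^ p := by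
  apply continuous_iff_continuousAt.mpr
  intro y
  exact ContinuousAt.rpow_const (by fun_prop) (Or.inr hp)

lemma one_le_rpow' {x p : ℝ} (hx : 1 ≤ x) (hp : 0 ≤ p) : 1 ≤ x ^ p := by
  calc (1:ℝ) = 1 ^ p := (Real.one_rpow p).symm
    _ ≤ x ^ p := Real.rpow_le_rpow (by norm_num) hx hp

section Sol

variable {d : ℝ} {F : ℝ → ℝ}

/-- exponent of the solution -/
noncomputable def E (d : ℝ) (F : ℝ → ℝ) (x : ℝ) : ℝ :=
  d * ∫ y in Ioi (-x), (x + y) ^ (d - 1) * F y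

lemma sol_eq (heq : ∀ x : ℝ, F x = Real.exp (-(d * ∫ y in Ioi (-x), (x + y) ^ (d - 1) * F y)))
    (x : ℝ) : F x = Real.exp (-(E d F x)) := heq x

lemma sol_pos (heq : ∀ x : ℝ, F x = Real.exp (-(d * ∫ y in Ioi (-x), (x + y) ^ (d - 1) * F y)))
    (x : ℝ) : 0 < F x := by rw [heq x]; exact Real.exp_pos _

lemma integrand_nonneg (hbd : ∀ x, F x ∈ Icc (0:ℝ) 1) (x : ℝ) :
    ∀ y ∈ Ioi (-x), 0 ≤ (x + y) ^ (d - 1) * F y := by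
  intro y hy
  have : -x < y := hy
  exact mul_nonneg (Real.rpow_nonneg (by linarith) _) (hbd y).1

lemma E_nonneg (hd : 1 < d) (hbd : ∀ x, F x ∈ Icc (0:ℝ) 1) (x : ℝ) : 0 ≤ E d F x := by
  apply mul_nonneg (by linarith)
  exact setIntegral_nonneg measurableSet_Ioi (integrand_nonneg hbd x)

lemma integral_shift_rpow (hd : 1 < d) {x : ℝ} (hx : 0 ≤ x) :
    ∫ y in Ioc (-x) 0, (x + y) ^ (d - 1) = x ^ d / d := by
  have h := integral_Ioc_rpow hd (a := -x) (b := 0) (by linarith)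
  simp only [sub_neg_eq_add, zero_sub, neg_neg, zero_add] at h
  rw [← h]
  apply setIntegral_congr_fun measurableSet_Ioc
  intro y _
  simp [add_comm]

lemma nonneg_ae_restrict (hbd : ∀ x, F x ∈ Icc (0:ℝ) 1) (x : ℝ) :
    0 ≤ᵐ[volume.restrict (Ioi (-x))] fun y => (x + y) ^ (d - 1) * F y :=
  (ae_restrict_iff' measurableSet_Ioi).mpr
    (Filter.Eventually.of_forall (integrand_nonneg hbd x))

lemma sol_decay (hd : 1 < d) (hbd : ∀ x, F x ∈ Icc (0:ℝ) 1)
    (hint : ∀ x : ℝ, IntegrableOn (fun y => (x + y) ^ (d - 1) * F y) (Ioi (-x)))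
    (heq : ∀ x : ℝ, F x = Real.exp (-(d * ∫ y in Ioi (-x), (x + y) ^ (d - 1) * F y)))
    (hanti : Antitone F) {v : ℝ} (hv : 0 ≤ v) :
    F v ≤ Real.exp (-(F 0 * v ^ d)) := by
  rw [heq v]
  apply Real.exp_le_exp.mpr
  apply neg_le_neg
  have hd0 : (0:ℝ) < d := by linarith
  have hsub : Ioc (-v) (0:ℝ) ⊆ Ioi (-v) := Ioc_subset_Ioi_self
  have hintc : IntegrableOn (fun y => (v + y) ^ (d - 1) * F 0) (Ioc (-v) 0) :=
    ((continuous_rpow_shift (by linarith : (0:ℝ) ≤ d - 1)).mul continuous_const).integrableOn_Ioc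
  have hintF : IntegrableOn (fun y => (v + y) ^ (d - 1) * F y) (Ioc (-v) 0) :=
    (hint v).mono_set hsub
  have step1 : ∫ y in Ioc (-v) 0, (v + y) ^ (d - 1) * F 0 ≤
      ∫ y in Ioc (-v) 0, (v + y) ^ (d - 1) * F y := by
    apply setIntegral_mono_on hintc hintF measurableSet_Ioc
    intro y hy
    have hy1 : -v < y := hy.1
    exact mul_le_mul_of_nonneg_left (hanti hy.2) (Real.rpow_nonneg (by linarith) _)
  have step2 : ∫ y in Ioc (-v) 0, (v + y) ^ (d - 1) * F y ≤
      ∫ y in Ioi (-v), (v + y) ^ (d - 1) * F y := by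
    exact setIntegral_mono_set (hint v) (nonneg_ae_restrict hbd v)
      (HasSubset.Subset.eventuallyLE hsub)
  have hval : ∫ y in Ioc (-v) 0, (v + y) ^ (d - 1) * F 0 = F 0 * (v ^ d / d) := by
    rw [integral_mul_const, integral_shift_rpow hd hv, mul_comm]
  have : F 0 * (v ^ d / d) ≤ ∫ y in Ioi (-v), (v + y) ^ (d - 1) * F y := by
    rw [← hval]; exact le_trans step1 step2
  calc F 0 * v ^ d = d * (F 0 * (v ^ d / d)) := by field_simp
    _ ≤ d * ∫ y in Ioi (-v), (v + y) ^ (d - 1) * F y :=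
        mul_le_mul_of_nonneg_left this (by linarith)

lemma intF_Ioi0 (hd : 1 < d) (hbd : ∀ x, F x ∈ Icc (0:ℝ) 1)
    (hmeas : Measurable F)
    (hint : ∀ x : ℝ, IntegrableOn (fun y => (x + y) ^ (d - 1) * F y) (Ioi (-x))) :
    IntegrableOn F (Ioi (0:ℝ)) := by
  have h1 : IntegrableOn (fun y => ((1:ℝ) + y) ^ (d - 1) * F y) (Ioi 0) := by
    have := (hint 1).mono_set (Ioi_subset_Ioi (by norm_num : (-1:ℝ) ≤ 0))
    exact this
  apply Integrable.mono' h1 (hmeas.aestronglyMeasurable.restrict)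
  apply (ae_restrict_iff' measurableSet_Ioi).mpr
  apply Filter.Eventually.of_forall
  intro y hy
  have hy0 : (0:ℝ) < y := hy
  rw [Real.norm_eq_abs, abs_of_nonneg (hbd y).1]
  have h2 : (1:ℝ) ≤ (1 + y) ^ (d - 1) := one_le_rpow' (by linarith) (by linarith)
  nlinarith [(hbd y).1]

lemma intRpowF_Ioi0 (hint : ∀ x : ℝ, IntegrableOn (fun y => (x + y) ^ (d - 1) * F y) (Ioi (-x))) :
    IntegrableOn (fun y => y ^ (d - 1) * F y) (Ioi (0:ℝ)) := by
  have := hint 0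
  simpa using this

lemma int_exp_decay {c : ℝ} (hc : 0 < c) (hd : 1 < d) :
    IntegrableOn (fun σ => Real.exp (-(c * σ ^ d))) (Ioi (0:ℝ)) := by
  have hmaj : IntegrableOn (fun σ => Real.exp c * Real.exp (-(c * σ))) (Ioi (0:ℝ)) := by
    have := exp_neg_integrableOn_Ioi 0 hc
    have h1 : IntegrableOn (fun σ => Real.exp (-(c * σ))) (Ioi (0:ℝ)) := by simpa [neg_mul] using this
    exact h1.const_mul (Real.exp c)
  apply Integrable.mono' hmaj
  · apply Continuous.aestronglyMeasurable
    apply Real.continuous_exp.comp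
    apply Continuous.neg
    exact continuous_const.mul (by simpa using continuous_rpow_shift (c := 0) (le_of_lt (by linarith : (0:ℝ) < d)))
  · apply (ae_restrict_iff' measurableSet_Ioi).mpr
    apply Filter.Eventually.of_forall
    intro σ hσ
    have hσ0 : (0:ℝ) < σ := hσ
    rw [Real.norm_eq_abs, abs_of_nonneg (Real.exp_nonneg _), ← Real.exp_add]
    apply Real.exp_le_exp.mpr
    rcases le_total σ 1 with h | h
    · have : 0 ≤ c * σ ^ d := mul_nonneg hc.le (Real.rpow_nonneg hσ0.le _)
      nlinarith
    · have : σ ≤ σ ^ d := by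
        calc σ = σ ^ (1:ℝ) := (Real.rpow_one σ).symm
          _ ≤ σ ^ d := Real.rpow_le_rpow_of_exponent_le h (by linarith)
      nlinarith

lemma ftc_exp_rpow {c : ℝ} (hc : 0 < c) (hd : 1 < d) {σ : ℝ} (hσ : 0 ≤ σ) :
    IntegrableOn (fun y => y ^ (d - 1) * Real.exp (-(c * y ^ d))) (Ioi σ) ∧
    ∫ y in Ioi σ, y ^ (d - 1) * Real.exp (-(c * y ^ d)) = Real.exp (-(c * σ ^ d)) / (c * d) := by
  have hd0 : (0:ℝ) < d := by linarith
  set G : ℝ → ℝ := fun y => -(Real.exp (-(c * y ^ d)) / (c * d)) with hG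
  have hcont : Continuous G := by
    apply Continuous.neg
    apply Continuous.div_const
    apply Real.continuous_exp.comp
    apply Continuous.neg
    exact continuous_const.mul (by simpa using continuous_rpow_shift (c := 0) hd0.le)
  have hderiv : ∀ y ∈ Ioi σ, HasDerivAt G (y ^ (d - 1) * Real.exp (-(c * y ^ d))) y := by
    intro y hy
    have hy0 : 0 < y := lt_of_le_of_lt hσ hy
    have h1 : HasDerivAt (fun x : ℝ => x ^ d) (d * y ^ (d - 1)) y :=
      Real.hasDerivAt_rpow_const (Or.inl (ne_of_gt hy0))
    have h2 : HasDerivAt (fun x : ℝ => -(c * x ^ d)) (-(c * (d * y ^ (d - 1)))) y :=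
      ((h1.const_mul c).neg)
    have h3 := (h2.exp).div_const (c * d)
    have h4 : HasDerivAt (fun x => -(Real.exp (-(c * x ^ d)) / (c * d))) _ y := h3.neg
    convert h4 using 1
    have hcd : c * d ≠ 0 := by positivity
    rw [eq_comm, neg_eq_iff_eq_neg, div_eq_iff hcd]
    ring
  have htend : Tendsto G atTop (nhds 0) := by
    have h1 : Tendsto (fun y : ℝ => c * y ^ d) atTop atTop :=
      (tendsto_rpow_atTop hd0).const_mul_atTop hc
    have h2 : Tendsto (fun y : ℝ => Real.exp (-(c * y ^ d))) atTop (nhds 0) :=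
      Real.tendsto_exp_neg_atTop_nhds_zero.comp h1
    have h3 := (h2.div_const (c * d)).neg
    simpa using h3
  have hpos : ∀ y ∈ Ioi σ, 0 ≤ y ^ (d - 1) * Real.exp (-(c * y ^ d)) := by
    intro y hy
    have hy0 : 0 < y := lt_of_le_of_lt hσ hy
    exact mul_nonneg (Real.rpow_nonneg hy0.le _) (Real.exp_nonneg _)
  have hci : ContinuousWithinAt G (Ici σ) σ := hcont.continuousWithinAt
  refine ⟨integrableOn_Ioi_deriv_of_nonneg hci hderiv hpos htend, ?_⟩
  rw [integral_Ioi_of_hasDerivAt_of_tendsto hci hderiv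
    (integrableOn_Ioi_deriv_of_nonneg hci hderiv hpos htend) htend]
  simp [hG]


lemma sol_tail_up (hd : 1 < d) (hbd : ∀ x, F x ∈ Icc (0:ℝ) 1)
    (hint : ∀ x : ℝ, IntegrableOn (fun y => (x + y) ^ (d - 1) * F y) (Ioi (-x)))
    (heq : ∀ x : ℝ, F x = Real.exp (-(d * ∫ y in Ioi (-x), (x + y) ^ (d - 1) * F y)))
    (hanti : Antitone F) {σ : ℝ} (hσ : 0 ≤ σ) :
    1 - F (-σ) ≤ (1 / F 0) * Real.exp (-(F 0 * σ ^ d)) := by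
  have hc : 0 < F 0 := sol_pos heq 0
  have hd0 : (0:ℝ) < d := by linarith
  have hIoi : Ioi (- -σ) = Ioi σ := by rw [neg_neg]
  have h1 : 1 - F (-σ) ≤ d * ∫ y in Ioi σ, (-σ + y) ^ (d - 1) * F y := by
    have he := heq (-σ)
    rw [hIoi] at he
    rw [he]
    have := Real.add_one_le_exp (-(d * ∫ y in Ioi σ, (-σ + y) ^ (d - 1) * F y))
    linarith
  have hintl : IntegrableOn (fun y => (-σ + y) ^ (d - 1) * F y) (Ioi σ) := by
    have := hint (-σ); rwa [hIoi] at this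
  have hftc := ftc_exp_rpow hc hd hσ
  have h2 : ∫ y in Ioi σ, (-σ + y) ^ (d - 1) * F y ≤
      ∫ y in Ioi σ, y ^ (d - 1) * Real.exp (-(F 0 * y ^ d)) := by
    apply setIntegral_mono_on hintl hftc.1 measurableSet_Ioi
    intro y hy
    have hyσ : σ < y := hy
    have hy0 : 0 ≤ y := le_trans hσ hyσ.le
    apply mul_le_mul
    · exact Real.rpow_le_rpow (by linarith) (by linarith) (by linarith)
    · exact sol_decay hd hbd hint heq hanti hy0
    · exact (hbd y).1
    · exact Real.rpow_nonneg hy0 _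
  rw [hftc.2] at h2
  have : d * ∫ y in Ioi σ, (-σ + y) ^ (d - 1) * F y ≤
      d * (Real.exp (-(F 0 * σ ^ d)) / (F 0 * d)) :=
    mul_le_mul_of_nonneg_left h2 hd0.le
  have heval : d * (Real.exp (-(F 0 * σ ^ d)) / (F 0 * d)) =
      (1 / F 0) * Real.exp (-(F 0 * σ ^ d)) := by
    field_simp
  linarith

/-- the constant `M` -/
noncomputable def Mc (d : ℝ) (F : ℝ → ℝ) : ℝ :=
  ∫ σ in Ioi (0:ℝ), (1 / F 0) * Real.exp (-(F 0 * σ ^ d))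

lemma Mc_nonneg (hc : 0 < F 0) : 0 ≤ Mc d F := by
  apply setIntegral_nonneg measurableSet_Ioi
  intro y _
  positivity

lemma intF_bounded (hbd : ∀ x, F x ∈ Icc (0:ℝ) 1) (hmeas : Measurable F) (a b : ℝ) :
    IntegrableOn F (Ioc a b) := by
  apply Integrable.mono' (integrable_const (1:ℝ)) hmeas.aestronglyMeasurable.restrict
  apply Filter.Eventually.of_forall
  intro y
  rw [Real.norm_eq_abs, abs_of_nonneg (hbd y).1]
  exact (hbd y).2

lemma tail_int_le_Mc (hd : 1 < d) (hbd : ∀ x, F x ∈ Icc (0:ℝ) 1) (hmeas : Measurable F)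
    (hint : ∀ x : ℝ, IntegrableOn (fun y => (x + y) ^ (d - 1) * F y) (Ioi (-x)))
    (heq : ∀ x : ℝ, F x = Real.exp (-(d * ∫ y in Ioi (-x), (x + y) ^ (d - 1) * F y)))
    (hanti : Antitone F) {x : ℝ} (hx : 0 ≤ x) :
    ∫ y in Ioc (-x) 0, (1 - F y) ≤ Mc d F := by
  have hc : 0 < F 0 := sol_pos heq 0
  set h : ℝ → ℝ := fun σ => (1 / F 0) * Real.exp (-(F 0 * σ ^ d)) with hh
  have hcont : Continuous h := by
    apply Continuous.mul continuous_const
    apply Real.continuous_exp.comp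
    apply Continuous.neg
    exact continuous_const.mul (by simpa using continuous_rpow_shift (c := 0) (by linarith : (0:ℝ) ≤ d))
  have hint1 : IntegrableOn (fun y => 1 - F y) (Ioc (-x) 0) :=
    (integrable_const 1).sub (intF_bounded hbd hmeas _ _)
  have step1 : ∫ y in Ioc (-x) 0, (1 - F y) ≤ ∫ y in Ioc (-x) 0, h (-y) := by
    apply setIntegral_mono_on hint1 ((hcont.comp continuous_neg).integrableOn_Ioc) measurableSet_Ioc
    intro y hy
    have hy2 : y ≤ 0 := hy.2
    have := sol_tail_up hd hbd hint heq hanti (σ := -y) (by linarith)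
    rwa [neg_neg] at this
  have step2 : ∫ y in Ioc (-x) 0, h (-y) = ∫ σ in Ioc 0 x, h σ := by
    rw [← intervalIntegral.integral_of_le (by linarith : -x ≤ (0:ℝ))]
    rw [show ∫ y in (-x)..(0:ℝ), h (-y) = ∫ σ in (-(0:ℝ))..(-(-x)), h σ from
      intervalIntegral.integral_comp_neg (a := -x) (b := 0) h]
    rw [neg_neg, neg_zero, intervalIntegral.integral_of_le hx]
  have step3 : ∫ σ in Ioc 0 x, h σ ≤ Mc d F := by
    apply setIntegral_mono_set
    · exact (int_exp_decay hc hd).const_mul _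
    · apply (ae_restrict_iff' measurableSet_Ioi).mpr
      apply Filter.Eventually.of_forall
      intro y _
      positivity
    · exact HasSubset.Subset.eventuallyLE Ioc_subset_Ioi_self
  rw [step2] at step1
  exact le_trans step1 step3

lemma sol_lower (hd : 1 < d) (hbd : ∀ x, F x ∈ Icc (0:ℝ) 1) (hmeas : Measurable F)
    (hint : ∀ x : ℝ, IntegrableOn (fun y => (x + y) ^ (d - 1) * F y) (Ioi (-x)))
    (heq : ∀ x : ℝ, F x = Real.exp (-(d * ∫ y in Ioi (-x), (x + y) ^ (d - 1) * F y)))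
    (hanti : Antitone F) {x : ℝ} (hx : 0 ≤ x) :
    x ^ d - (d * Mc d F) * x ^ (d - 1) ≤ d * ∫ y in Ioi (-x), (x + y) ^ (d - 1) * F y := by
  have hd0 : (0:ℝ) < d := by linarith
  have hp : (0:ℝ) ≤ d - 1 := by linarith
  have hsub : Ioc (-x) (0:ℝ) ⊆ Ioi (-x) := Ioc_subset_Ioi_self
  have hIw : IntegrableOn (fun y => (x + y) ^ (d - 1)) (Ioc (-x) 0) :=
    (continuous_rpow_shift hp).integrableOn_Ioc
  have hIF : IntegrableOn (fun y => (x + y) ^ (d - 1) * F y) (Ioc (-x) 0) :=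
    (hint x).mono_set hsub
  have hIone : IntegrableOn (fun y => (x + y) ^ (d - 1) * (1 - F y)) (Ioc (-x) 0) := by
    have : (fun y => (x + y) ^ (d - 1) * (1 - F y)) =
        (fun y => (x + y) ^ (d - 1)) - fun y => (x + y) ^ (d - 1) * F y := by
      funext y; simp; ring
    rw [this]
    exact hIw.sub hIF
  have hsplit : ∫ y in Ioc (-x) 0, (x + y) ^ (d - 1) * F y =
      (∫ y in Ioc (-x) 0, (x + y) ^ (d - 1)) - ∫ y in Ioc (-x) 0, (x + y) ^ (d - 1) * (1 - F y) := by
    rw [← integral_sub hIw hIone]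
    apply setIntegral_congr_fun measurableSet_Ioc
    intro y _
    simp
    ring
  have hb1 : ∫ y in Ioc (-x) 0, (x + y) ^ (d - 1) * (1 - F y) ≤
      ∫ y in Ioc (-x) 0, x ^ (d - 1) * (1 - F y) := by
    apply setIntegral_mono_on hIone _ measurableSet_Ioc
    · intro y hy
      have hy1 : -x < y := hy.1
      have hy2 : y ≤ 0 := hy.2
      apply mul_le_mul_of_nonneg_right
      · exact Real.rpow_le_rpow (by linarith) (by linarith) hp
      · have := (hbd y).2; linarith
    · exact ((integrable_const 1).sub (intF_bounded hbd hmeas _ _)).const_mul _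
  have hb2 : ∫ y in Ioc (-x) 0, x ^ (d - 1) * (1 - F y) ≤ x ^ (d - 1) * Mc d F := by
    rw [integral_const_mul]
    exact mul_le_mul_of_nonneg_left (tail_int_le_Mc hd hbd hmeas hint heq hanti hx)
      (Real.rpow_nonneg hx _)
  have hmono : ∫ y in Ioc (-x) 0, (x + y) ^ (d - 1) * F y ≤
      ∫ y in Ioi (-x), (x + y) ^ (d - 1) * F y :=
    setIntegral_mono_set (hint x) (nonneg_ae_restrict hbd x)
      (HasSubset.Subset.eventuallyLE hsub)
  have hval : ∫ y in Ioc (-x) 0, (x + y) ^ (d - 1) = x ^ d / d := integral_shift_rpow hd hx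
  have : x ^ d / d - x ^ (d - 1) * Mc d F ≤ ∫ y in Ioi (-x), (x + y) ^ (d - 1) * F y := by
    rw [← hval]
    linarith
  calc x ^ d - (d * Mc d F) * x ^ (d - 1) = d * (x ^ d / d - x ^ (d - 1) * Mc d F) := by
        field_simp
    _ ≤ d * ∫ y in Ioi (-x), (x + y) ^ (d - 1) * F y := mul_le_mul_of_nonneg_left this hd0.le


/-- constants for the upper bound -/
noncomputable def Ac (d : ℝ) (F : ℝ → ℝ) : ℝ := d * 2 ^ (d - 1) * ∫ y in Ioi (0:ℝ), F y
noncomputable def Bc (d : ℝ) (F : ℝ → ℝ) : ℝ := d * 2 ^ (d - 1) * ∫ y in Ioi (0:ℝ), y ^ (d - 1) * F y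

lemma Ac_nonneg (hd : 1 < d) (hbd : ∀ x, F x ∈ Icc (0:ℝ) 1) : 0 ≤ Ac d F := by
  apply mul_nonneg (mul_nonneg (by linarith) (Real.rpow_nonneg (by norm_num) _))
  exact setIntegral_nonneg measurableSet_Ioi fun y _ => (hbd y).1

lemma Bc_nonneg (hd : 1 < d) (hbd : ∀ x, F x ∈ Icc (0:ℝ) 1) : 0 ≤ Bc d F := by
  apply mul_nonneg (mul_nonneg (by linarith) (Real.rpow_nonneg (by norm_num) _))
  apply setIntegral_nonneg measurableSet_Ioi
  intro y hy
  have : (0:ℝ) < y := hy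
  exact mul_nonneg (Real.rpow_nonneg this.le _) (hbd y).1

lemma sol_upper (hd : 1 < d) (hbd : ∀ x, F x ∈ Icc (0:ℝ) 1) (hmeas : Measurable F)
    (hint : ∀ x : ℝ, IntegrableOn (fun y => (x + y) ^ (d - 1) * F y) (Ioi (-x))) {x : ℝ}
    (hx : 0 ≤ x) :
    d * ∫ y in Ioi (-x), (x + y) ^ (d - 1) * F y ≤
      x ^ d + Ac d F * x ^ (d - 1) + Bc d F := by
  have hd0 : (0:ℝ) < d := by linarith
  have hp : (0:ℝ) ≤ d - 1 := by linarith
  have hIF1 : IntegrableOn (fun y => (x + y) ^ (d - 1) * F y) (Ioc (-x) 0) :=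
    (hint x).mono_set Ioc_subset_Ioi_self
  have hIF2 : IntegrableOn (fun y => (x + y) ^ (d - 1) * F y) (Ioi 0) :=
    (hint x).mono_set (Ioi_subset_Ioi (by linarith))
  have hunion : Ioc (-x) (0:ℝ) ∪ Ioi (0:ℝ) = Ioi (-x) := Ioc_union_Ioi_eq_Ioi (by linarith)
  have hsplit : ∫ y in Ioi (-x), (x + y) ^ (d - 1) * F y =
      (∫ y in Ioc (-x) 0, (x + y) ^ (d - 1) * F y) + ∫ y in Ioi 0, (x + y) ^ (d - 1) * F y := by
    rw [← hunion]
    exact setIntegral_union Ioc_disjoint_Ioi_same measurableSet_Ioi hIF1 hIF2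
  have hb1 : ∫ y in Ioc (-x) 0, (x + y) ^ (d - 1) * F y ≤ x ^ d / d := by
    rw [← integral_shift_rpow hd hx]
    apply setIntegral_mono_on hIF1 ((continuous_rpow_shift hp).integrableOn_Ioc) measurableSet_Ioc
    intro y hy
    have hy1 : -x < y := hy.1
    nth_rewrite 2 [← mul_one ((x + y) ^ (d - 1))]
    exact mul_le_mul_of_nonneg_left (hbd y).2 (Real.rpow_nonneg (by linarith) _)
  have hIA : IntegrableOn (fun y => 2 ^ (d-1) * x ^ (d-1) * F y) (Ioi 0) :=
    (intF_Ioi0 hd hbd hmeas hint).const_mul _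
  have hIB : IntegrableOn (fun y => 2 ^ (d-1) * (y ^ (d-1) * F y)) (Ioi 0) :=
    (intRpowF_Ioi0 hint).const_mul _
  have hb2 : ∫ y in Ioi 0, (x + y) ^ (d - 1) * F y ≤
      (∫ y in Ioi 0, 2 ^ (d-1) * x ^ (d-1) * F y) + ∫ y in Ioi 0, 2 ^ (d-1) * (y ^ (d-1) * F y) := by
    rw [← integral_add hIA hIB]
    apply setIntegral_mono_on hIF2 (hIA.add hIB) measurableSet_Ioi
    intro y hy
    have hy0 : (0:ℝ) < y := hy
    have h1 := rpow_subadd_crude hd hx hy0.le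
    have h2 : (x + y) ^ (d-1) * F y ≤ (2 ^ (d-1) * (x ^ (d-1) + y ^ (d-1))) * F y :=
      mul_le_mul_of_nonneg_right h1 (hbd y).1
    calc (x + y) ^ (d-1) * F y ≤ (2 ^ (d-1) * (x ^ (d-1) + y ^ (d-1))) * F y := h2
      _ = 2 ^ (d-1) * x ^ (d-1) * F y + 2 ^ (d-1) * (y ^ (d-1) * F y) := by ring
  rw [integral_const_mul, integral_const_mul] at hb2
  have key : ∫ y in Ioi (-x), (x + y) ^ (d - 1) * F y ≤
      x ^ d / d + (2 ^ (d-1) * x ^ (d-1) * ∫ y in Ioi 0, F y)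
        + 2 ^ (d-1) * ∫ y in Ioi 0, y ^ (d-1) * F y := by
    rw [hsplit]
    linarith [hb1, hb2]
  calc d * ∫ y in Ioi (-x), (x + y) ^ (d - 1) * F y ≤
      d * (x ^ d / d + (2 ^ (d-1) * x ^ (d-1) * ∫ y in Ioi 0, F y)
        + 2 ^ (d-1) * ∫ y in Ioi 0, y ^ (d-1) * F y) := by
        apply mul_le_mul_of_nonneg_left _ hd0.le
        linarith [key]
    _ = x ^ d + Ac d F * x ^ (d - 1) + Bc d F := by
        unfold Ac Bc
        field_simp


lemma sol_S4 (hd : 1 < d) (hbd : ∀ x, F x ∈ Icc (0:ℝ) 1)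
    (hint : ∀ x : ℝ, IntegrableOn (fun y => (x + y) ^ (d - 1) * F y) (Ioi (-x)))
    (heq : ∀ x : ℝ, F x = Real.exp (-(d * ∫ y in Ioi (-x), (x + y) ^ (d - 1) * F y)))
    (hanti : Antitone F) (σ : ℝ) :
    Real.exp (-1) * F (σ + 2) ≤ 1 - F (-σ) := by
  have hd0 : (0:ℝ) < d := by linarith
  have hIoi : Ioi (- -σ) = Ioi σ := by rw [neg_neg]
  set Eσ : ℝ := d * ∫ y in Ioi σ, (-σ + y) ^ (d - 1) * F y with hE
  have hintl : IntegrableOn (fun y => (-σ + y) ^ (d - 1) * F y) (Ioi σ) := by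
    have := hint (-σ); rwa [hIoi] at this
  have hFeq : F (-σ) = Real.exp (-Eσ) := by
    have he := heq (-σ); rwa [hIoi] at he
  have hElb : F (σ + 2) ≤ Eσ := by
    have hstep1 : ∫ y in Ioc (σ+1) (σ+2), (F (σ+2) : ℝ) ≤
        ∫ y in Ioc (σ+1) (σ+2), (-σ + y) ^ (d - 1) * F y := by
      apply setIntegral_mono_on (integrableOn_const (by simp))
        (hintl.mono_set (fun y hy => lt_trans (by linarith) hy.1))
        measurableSet_Ioc
      intro y hy
      have hy1 : σ + 1 < y := hy.1
      have hy2 : y ≤ σ + 2 := hy.2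
      have hw : (1:ℝ) ≤ (-σ + y) ^ (d - 1) := one_le_rpow' (by linarith) (by linarith)
      calc F (σ+2) = 1 * F (σ+2) := (one_mul _).symm
        _ ≤ (-σ + y) ^ (d - 1) * F y :=
            mul_le_mul hw (hanti hy2) (hbd (σ+2)).1 (by linarith)
    have hconst : ∫ y in Ioc (σ+1) (σ+2), (F (σ+2) : ℝ) = F (σ+2) := by
      simp [Real.volume_Ioc]
      norm_num
    have hstep2 : ∫ y in Ioc (σ+1) (σ+2), (-σ + y) ^ (d - 1) * F y ≤
        ∫ y in Ioi σ, (-σ + y) ^ (d - 1) * F y := by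
      apply setIntegral_mono_set hintl
      · apply (ae_restrict_iff' measurableSet_Ioi).mpr
        apply Filter.Eventually.of_forall
        intro y hy
        have : σ < y := hy
        exact mul_nonneg (Real.rpow_nonneg (by linarith) _) (hbd y).1
      · exact HasSubset.Subset.eventuallyLE (fun y hy => lt_trans (by linarith) hy.1)
    have h3 : F (σ+2) ≤ ∫ y in Ioi σ, (-σ + y) ^ (d - 1) * F y := by
      rw [← hconst]; linarith
    calc F (σ+2) = 1 * F (σ+2) := (one_mul _).symm
      _ ≤ d * ∫ y in Ioi σ, (-σ + y) ^ (d - 1) * F y := by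
          apply mul_le_mul (by linarith) h3 (hbd (σ+2)).1 hd0.le
  have hE0 : 0 ≤ Eσ := by
    apply mul_nonneg hd0.le
    apply setIntegral_nonneg measurableSet_Ioi
    intro y hy
    have : σ < y := hy
    exact mul_nonneg (Real.rpow_nonneg (by linarith) _) (hbd y).1
  rw [hFeq]
  have hF2 : 0 ≤ F (σ+2) := (hbd (σ+2)).1
  have hF2' : F (σ+2) ≤ 1 := (hbd (σ+2)).2
  rcases le_total Eσ 1 with hE1 | hE1
  · -- 1 - exp(-E) ≥ E exp(-E) ≥ E exp(-1) ≥ F(σ+2) exp(-1)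
    have h1 : Eσ + 1 ≤ Real.exp Eσ := Real.add_one_le_exp Eσ
    have h2 : Real.exp (-Eσ) * Real.exp Eσ = 1 := by
      rw [← Real.exp_add]; simp
    have h3 : Real.exp (-1) ≤ Real.exp (-Eσ) := Real.exp_le_exp.mpr (by linarith)
    have h4 : Eσ * Real.exp (-Eσ) ≤ 1 - Real.exp (-Eσ) := by
      nlinarith [Real.exp_pos (-Eσ)]
    have h5 : Real.exp (-1) * F (σ+2) ≤ Eσ * Real.exp (-Eσ) := by
      nlinarith [Real.exp_pos (-1), Real.exp_pos (-Eσ)]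
    linarith
  · have h3 : Real.exp (-Eσ) ≤ Real.exp (-1) := Real.exp_le_exp.mpr (by linarith)
    have h6 : Real.exp (1:ℝ) ≥ 2 := by
      have := Real.add_one_le_exp (1:ℝ); linarith
    have h7 : Real.exp (-1) = (Real.exp 1)⁻¹ := by
      rw [← Real.exp_neg]
    have h8 : Real.exp (-1) ≤ 1/2 := by
      rw [h7]
      rw [inv_le_comm₀ (by positivity) (by norm_num)]
      linarith
    have h9 : Real.exp (-1) * F (σ+2) ≤ Real.exp (-1) := by
      nth_rewrite 2 [← mul_one (Real.exp (-1))]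
      exact mul_le_mul_of_nonneg_left hF2' (Real.exp_nonneg _)
    linarith

lemma psi_linearize (hd : 1 < d) {K : ℝ} (hK : 0 ≤ K) :
    ∃ s₁ : ℝ, 1 ≤ s₁ ∧ ∀ s, s₁ ≤ s → ∀ y, s ≤ y →
      s ^ d - K * s ^ (d - 1) + (y - s) ≤ y ^ d - K * y ^ (d - 1) := by
  have hd0 : (0:ℝ) < d := by linarith
  have hd1 : (0:ℝ) < d - 1 := by linarith
  set s₂ : ℝ := (2 / d) ^ (d - 1)⁻¹ with hs₂
  have hs₂0 : 0 ≤ s₂ := Real.rpow_nonneg (by positivity) _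
  set s₁ : ℝ := max 1 (max (2 * K) s₂) with hs₁
  have hs₁1 : (1:ℝ) ≤ s₁ := le_max_left _ _
  refine ⟨s₁, hs₁1, ?_⟩
  have hlb : ∀ y : ℝ, s₁ ≤ y → 2 / d ≤ y ^ (d - 1) := by
    intro y hy
    have hy2 : s₂ ≤ y := le_trans (le_trans (le_max_right _ _) (le_max_right 1 _)) hy
    calc 2 / d = (2 / d) ^ ((d-1)⁻¹ * (d-1)) := by
          rw [inv_mul_cancel₀ (ne_of_gt hd1), Real.rpow_one]
      _ = s₂ ^ (d - 1) := by rw [Real.rpow_mul (by positivity)]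
      _ ≤ y ^ (d - 1) := Real.rpow_le_rpow hs₂0 hy2 hd1.le
  set ψ : ℝ → ℝ := fun y => y ^ d - K * y ^ (d - 1) - y with hψ
  have hcont : Continuous ψ := by
    apply Continuous.sub
    apply Continuous.sub
    · simpa using continuous_rpow_shift (c := 0) hd0.le
    · exact continuous_const.mul (by simpa using continuous_rpow_shift (c := 0) hd1.le)
    · exact continuous_id
  have hderiv : ∀ y : ℝ, 0 < y → HasDerivAt ψ
      (d * y ^ (d - 1) - K * ((d-1) * y ^ (d - 1 - 1)) - 1) y := by
    intro y hy0
    have h1 : HasDerivAt (fun x : ℝ => x ^ d) (d * y ^ (d - 1)) y :=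
      Real.hasDerivAt_rpow_const (Or.inl (ne_of_gt hy0))
    have h2 : HasDerivAt (fun x : ℝ => x ^ (d-1)) ((d-1) * y ^ (d - 1 - 1)) y :=
      Real.hasDerivAt_rpow_const (Or.inl (ne_of_gt hy0))
    exact (h1.sub (h2.const_mul K)).sub (hasDerivAt_id y)
  have hmono : MonotoneOn ψ (Ici s₁) := by
    apply monotoneOn_of_deriv_nonneg (convex_Ici s₁) hcont.continuousOn
    · intro y hy
      rw [interior_Ici] at hy
      have hy0 : 0 < y := lt_of_lt_of_le (by linarith) (le_of_lt hy)
      exact (hderiv y hy0).differentiableAt.differentiableWithinAt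
    · intro y hy
      rw [interior_Ici] at hy
      have hys : s₁ < y := hy
      have hy0 : 0 < y := lt_of_lt_of_le (by linarith) hys.le
      rw [(hderiv y hy0).deriv]
      have hu0 : 0 ≤ y ^ (d - 1 - 1) := Real.rpow_nonneg hy0.le _
      have hyd : y ^ (d - 1) = y ^ (d - 1 - 1) * y := by
        rw [← Real.rpow_add_one (ne_of_gt hy0)]
        ring_nf
      have h2K : 2 * K ≤ y := le_trans (le_trans (le_max_left _ _) (le_max_right 1 _)) hys.le
      have hld : 2 / d ≤ y ^ (d - 1) := hlb y hys.le
      rw [hyd] at hld ⊢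
      have hdy : 2 ≤ d * (y ^ (d - 1 - 1) * y) := by
        rw [div_le_iff₀ hd0] at hld
        linarith
      nlinarith [mul_nonneg hu0 hK]
  intro s hs y hy
  have h1 : ψ s ≤ ψ y := hmono (mem_Ici.mpr hs) (mem_Ici.mpr (le_trans hs hy)) hy
  simp only [hψ] at h1
  linarith

/-- Gamma-type constant -/
noncomputable def Gc (d : ℝ) : ℝ := ∫ w in Ioi (0:ℝ), w ^ (d - 1) * Real.exp (-w)

lemma Gc_int (hd : 1 < d) : IntegrableOn (fun w => w ^ (d - 1) * Real.exp (-w)) (Ioi (0:ℝ)) := by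
  have := Real.GammaIntegral_convergent (by linarith : (0:ℝ) < d)
  apply this.congr_fun _ measurableSet_Ioi
  intro w _
  ring

lemma Gc_nonneg (hd : 1 < d) : 0 ≤ Gc d := by
  apply setIntegral_nonneg measurableSet_Ioi
  intro y hy
  have : (0:ℝ) < y := hy
  exact mul_nonneg (Real.rpow_nonneg this.le _) (Real.exp_nonneg _)

lemma sol_S5 (hd : 1 < d) (hbd : ∀ x, F x ∈ Icc (0:ℝ) 1) (hmeas : Measurable F)
    (hint : ∀ x : ℝ, IntegrableOn (fun y => (x + y) ^ (d - 1) * F y) (Ioi (-x)))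
    (heq : ∀ x : ℝ, F x = Real.exp (-(d * ∫ y in Ioi (-x), (x + y) ^ (d - 1) * F y)))
    (hanti : Antitone F) {s₁ : ℝ} (hs₁1 : 1 ≤ s₁)
    (hpsi : ∀ s, s₁ ≤ s → ∀ y, s ≤ y →
      s ^ d - (d * Mc d F) * s ^ (d - 1) + (y - s) ≤ y ^ d - (d * Mc d F) * y ^ (d - 1))
    {s : ℝ} (hs : s₁ ≤ s) :
    d * ∫ y in Ioi s, (-s + y) ^ (d - 1) * F y ≤
      (d * Gc d) * Real.exp (-(s ^ d - (d * Mc d F) * s ^ (d - 1))) := by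
  have hd0 : (0:ℝ) < d := by linarith
  have hs0 : (0:ℝ) ≤ s := by linarith
  set K : ℝ := d * Mc d F with hKdef
  set φs : ℝ := s ^ d - K * s ^ (d - 1) with hφs
  have hIoi : Ioi (- -s) = Ioi s := by rw [neg_neg]
  have hintl : IntegrableOn (fun y => (-s + y) ^ (d - 1) * F y) (Ioi s) := by
    have := hint (-s); rwa [hIoi] at this
  -- the majorant
  set G : ℝ → ℝ := fun w => w ^ (d - 1) * Real.exp (-w) with hG
  have hGint : IntegrableOn (fun y => G (y + -s)) (Ioi s) := by
    apply shift_integrableOn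
    have : s + -s = 0 := by ring
    rw [this]
    exact Gc_int hd
  have hGval : ∫ y in Ioi s, G (y + -s) = Gc d := by
    rw [shift_setIntegral G s (-s)]
    have : s + -s = 0 := by ring
    rw [this]
    rfl
  have hmaj : IntegrableOn (fun y => Real.exp (-φs) * G (y + -s)) (Ioi s) := hGint.const_mul _
  have hbound : ∫ y in Ioi s, (-s + y) ^ (d - 1) * F y ≤
      ∫ y in Ioi s, Real.exp (-φs) * G (y + -s) := by
    apply setIntegral_mono_on hintl hmaj measurableSet_Ioi
    intro y hy
    have hsy : s < y := hy
    have hy0 : 0 ≤ y := le_trans hs0 hsy.le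
    have hF : F y ≤ Real.exp (-(y ^ d - K * y ^ (d - 1))) := by
      rw [heq y]
      apply Real.exp_le_exp.mpr
      apply neg_le_neg
      exact sol_lower hd hbd hmeas hint heq hanti hy0
    have hψ : φs + (y - s) ≤ y ^ d - K * y ^ (d - 1) := hpsi s hs y hsy.le
    have hF2 : F y ≤ Real.exp (-φs) * Real.exp (-(y - s)) := by
      rw [← Real.exp_add]
      apply le_trans hF
      apply Real.exp_le_exp.mpr
      linarith
    have hw : (-s + y) ^ (d - 1) = (y - s) ^ (d - 1) := by rw [neg_add_eq_sub]
    rw [hw, hG]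
    have hws : (0:ℝ) ≤ (y - s) ^ (d - 1) := Real.rpow_nonneg (by linarith) _
    calc (y - s) ^ (d - 1) * F y ≤ (y - s) ^ (d - 1) * (Real.exp (-φs) * Real.exp (-(y - s))) :=
          mul_le_mul_of_nonneg_left hF2 hws
      _ = Real.exp (-φs) * ((y + -s) ^ (d - 1) * Real.exp (-(y + -s))) := by ring_nf
  rw [integral_const_mul, hGval] at hbound
  calc d * ∫ y in Ioi s, (-s + y) ^ (d - 1) * F y ≤ d * (Real.exp (-φs) * Gc d) :=
        mul_le_mul_of_nonneg_left hbound hd0.le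
    _ = (d * Gc d) * Real.exp (-φs) := by ring

lemma rpow_split_prod (hd : 1 < d) {u : ℝ} (hu : 0 < u) : u ^ (d - 1) * u = u ^ d := by
  rw [← Real.rpow_add_one (ne_of_gt hu)]
  ring_nf

lemma eventually_poly (hd : 1 < d) (C₁ C₂ : ℝ) :
    ∀ᶠ u in atTop, C₁ * u ^ (d - 1) + C₂ ≤ u ^ d / 2 := by
  have hd1 : (0:ℝ) < d - 1 := by linarith
  have h1 : Tendsto (fun u : ℝ => u / 2 - (|C₁| + 1)) atTop atTop := by
    apply tendsto_atTop_add_const_right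
    exact tendsto_id.atTop_div_const (by norm_num)
  have h2 : Tendsto (fun u : ℝ => u ^ (d - 1) * (u / 2 - (|C₁| + 1))) atTop atTop :=
    (tendsto_rpow_atTop hd1).atTop_mul_atTop₀ h1
  filter_upwards [h2.eventually_ge_atTop (C₂ + |C₁|), eventually_gt_atTop (0:ℝ),
    eventually_ge_atTop (1:ℝ)] with u hu1 hu2 hu3
  have hsplit : u ^ (d - 1) * u = u ^ d := rpow_split_prod hd hu2
  have hP1 : (1:ℝ) ≤ u ^ (d - 1) := one_le_rpow' hu3 hd1.le
  have habs : C₁ * u ^ (d - 1) ≤ |C₁| * u ^ (d - 1) :=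
    mul_le_mul_of_nonneg_right (le_abs_self C₁) (by linarith)
  have h0 : 0 ≤ |C₁| := abs_nonneg C₁
  nlinarith [hP1, habs, h0]

lemma tendsto_exp_neg_phi (hd : 1 < d) (K C : ℝ) :
    Tendsto (fun s : ℝ => C * Real.exp (-(s ^ d - K * s ^ (d - 1)))) atTop (nhds 0) := by
  have hd1 : (0:ℝ) < d - 1 := by linarith
  have h1 : Tendsto (fun s : ℝ => s ^ (d - 1) * (s - K)) atTop atTop :=
    (tendsto_rpow_atTop hd1).atTop_mul_atTop₀ (tendsto_atTop_add_const_right _ _ tendsto_id)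
  have h2 : Tendsto (fun s : ℝ => s ^ d - K * s ^ (d - 1)) atTop atTop := by
    apply h1.congr'
    filter_upwards [eventually_gt_atTop (0:ℝ)] with s hs
    have := rpow_split_prod hd hs
    nlinarith [this]
  have h3 : Tendsto (fun s : ℝ => Real.exp (-(s ^ d - K * s ^ (d - 1)))) atTop (nhds 0) :=
    Real.tendsto_exp_neg_atTop_nhds_zero.comp h2
  simpa using h3.const_mul C

lemma key_arith (hd : 1 < d) {a b K A C : ℝ} (hK : 0 ≤ K)
    (ha : 0 ≤ a) (hb : 0 ≤ b)
    (h3a : K * 2 ^ (d-1) + A ≤ d * b / 2)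
    (h3b : (K * 2 ^ (d-1)) * b ^ (d-1) + C ≤ b ^ d / 2) :
    a ^ d + A * a ^ (d-1) + C + K * (a+b) ^ (d-1) ≤ (a+b) ^ d := by
  have hsup := rpow_superadd hd.le ha hb
  have hber := rpow_bernoulli hd ha hb
  have hsub := rpow_subadd_crude hd ha hb
  have haP : (0:ℝ) ≤ a ^ (d-1) := Real.rpow_nonneg ha _
  have hKR : K * (a+b) ^ (d-1) ≤ K * (2 ^ (d-1) * (a ^ (d-1) + b ^ (d-1))) :=
    mul_le_mul_of_nonneg_left hsub hK
  have hB : 0 ≤ (d * b / 2 - (K * 2 ^ (d-1) + A)) * a ^ (d-1) :=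
    mul_nonneg (by linarith) haP
  nlinarith [hKR, hB, hsup, hber, h3b]

lemma exists_shift_le (hd : 1 < d) {f g : ℝ → ℝ}
    (hfm : Measurable f) (hfb : ∀ x, f x ∈ Icc (0:ℝ) 1)
    (hfi : ∀ x : ℝ, IntegrableOn (fun y => (x + y) ^ (d - 1) * f y) (Ioi (-x)))
    (hfe : ∀ x : ℝ, f x = Real.exp (-(d * ∫ y in Ioi (-x), (x + y) ^ (d - 1) * f y)))
    (hfa : Antitone f)
    (hgm : Measurable g) (hgb : ∀ x, g x ∈ Icc (0:ℝ) 1)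
    (hgi : ∀ x : ℝ, IntegrableOn (fun y => (x + y) ^ (d - 1) * g y) (Ioi (-x)))
    (hge : ∀ x : ℝ, g x = Real.exp (-(d * ∫ y in Ioi (-x), (x + y) ^ (d - 1) * g y)))
    (hga : Antitone g) :
    ∃ t : ℝ, 0 ≤ t ∧ ∀ x : ℝ, f (x + t) ≤ g x := by
  have hd0 : (0:ℝ) < d := by linarith
  have hd1 : (0:ℝ) < d - 1 := by linarith
  have hcf : 0 < f 0 := sol_pos hfe 0
  have hcg : 0 < g 0 := sol_pos hge 0
  have hKf : 0 ≤ d * Mc d f := mul_nonneg hd0.le (Mc_nonneg hcf)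
  have hKg : 0 ≤ d * Mc d g := mul_nonneg hd0.le (Mc_nonneg hcg)
  have hAf : 0 ≤ Ac d f := Ac_nonneg hd hfb
  have hBf : 0 ≤ Bc d f := Bc_nonneg hd hfb
  have hAg : 0 ≤ Ac d g := Ac_nonneg hd hgb
  have hBg : 0 ≤ Bc d g := Bc_nonneg hd hgb
  have hΓ : 0 ≤ d * Gc d := mul_nonneg hd0.le (Gc_nonneg hd)
  obtain ⟨s₁, hs₁1, hpsig⟩ := psi_linearize hd hKg
  have hεf0 : (0:ℝ) < Real.exp (-1) * Real.exp (-(2 ^ d + Ac d f * 2 ^ (d-1) + Bc d f)) := by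
    positivity
  have hτev : ∀ᶠ sv : ℝ in atTop,
      (d * Gc d) * Real.exp (-(sv ^ d - (d * Mc d g) * sv ^ (d - 1))) <
        Real.exp (-1) * Real.exp (-(2 ^ d + Ac d f * 2 ^ (d-1) + Bc d f)) :=
    (tendsto_exp_neg_phi hd (d * Mc d g) (d * Gc d)).eventually (gt_mem_nhds hεf0)
  obtain ⟨τ₀, hτ₀⟩ := eventually_atTop.mp hτev
  set τ : ℝ := max τ₀ s₁ with hτdef
  have hτs₁ : s₁ ≤ τ := le_max_right _ _
  have hτ1 : (1:ℝ) ≤ τ := le_trans hs₁1 hτs₁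
  have hτprop : ∀ sv, τ ≤ sv →
      (d * Gc d) * Real.exp (-(sv ^ d - (d * Mc d g) * sv ^ (d - 1))) ≤
        Real.exp (-1) * Real.exp (-(2 ^ d + Ac d f * 2 ^ (d-1) + Bc d f)) :=
    fun sv hsv => le_of_lt (hτ₀ sv (le_trans (le_max_left _ _) hsv))
  -- eventual conditions on t
  have htt : Tendsto (fun t : ℝ => t - 2) atTop atTop :=
    tendsto_atTop_add_const_right _ _ tendsto_id
  have E1a : ∀ᶠ t : ℝ in atTop, (d * Mc d f) * 2 ^ (d-1) + Ac d g ≤ d * t / 2 := by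
    have h : Tendsto (fun t : ℝ => d * t / 2) atTop atTop :=
      (tendsto_id.const_mul_atTop hd0).atTop_div_const (by norm_num)
    exact h.eventually_ge_atTop _
  have E1b : ∀ᶠ t : ℝ in atTop,
      ((d * Mc d f) * 2 ^ (d-1)) * t ^ (d-1) + Bc d g ≤ t ^ d / 2 :=
    eventually_poly hd _ _
  have E3a : ∀ᶠ t : ℝ in atTop, (d * Mc d g) * 2 ^ (d-1) + Ac d f ≤ d * (t - 2) / 2 := by
    have h : Tendsto (fun t : ℝ => d * (t - 2) / 2) atTop atTop :=
      ((htt.const_mul_atTop hd0).atTop_div_const (by norm_num))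
    exact h.eventually_ge_atTop _
  have E3b : ∀ᶠ t : ℝ in atTop,
      ((d * Mc d g) * 2 ^ (d-1)) * (t - 2) ^ (d-1) + (Bc d f + 1 + d * Gc d) ≤ (t - 2) ^ d / 2 :=
    htt.eventually (eventually_poly hd _ _)
  have E2 : ∀ᶠ t : ℝ in atTop, Real.exp (-(f 0 * (t - τ) ^ d)) ≤ g 0 := by
    have h1 : Tendsto (fun t : ℝ => (t - τ) ^ d) atTop atTop :=
      (tendsto_rpow_atTop hd0).comp (tendsto_atTop_add_const_right _ _ tendsto_id)
    have h2 : Tendsto (fun t : ℝ => f 0 * (t - τ) ^ d) atTop atTop :=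
      h1.const_mul_atTop hcf
    have h3 : Tendsto (fun t : ℝ => Real.exp (-(f 0 * (t - τ) ^ d))) atTop (nhds 0) := by
      exact Real.tendsto_exp_neg_atTop_nhds_zero.comp h2
    exact (h3.eventually (gt_mem_nhds hcg)).mono fun t ht => le_of_lt ht
  obtain ⟨t, h1a, h1b, h3a, h3b, h2, hτt, ht2⟩ :=
    (E1a.and (E1b.and (E3a.and (E3b.and (E2.and ((eventually_ge_atTop τ).and
      (eventually_ge_atTop (2:ℝ)))))))).exists
  have ht0 : (0:ℝ) ≤ t := by linarith
  refine ⟨t, ht0, fun x => ?_⟩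
  rcases le_or_gt 0 x with hx | hx
  · -- region x ≥ 0
    have hxt : (0:ℝ) ≤ x + t := by linarith
    have hup : f (x + t) ≤ Real.exp (-((x+t) ^ d - (d * Mc d f) * (x+t) ^ (d - 1))) := by
      rw [hfe (x+t)]
      exact Real.exp_le_exp.mpr (neg_le_neg (sol_lower hd hfb hfm hfi hfe hfa hxt))
    have hlo : Real.exp (-(x ^ d + Ac d g * x ^ (d - 1) + Bc d g)) ≤ g x := by
      rw [hge x]
      exact Real.exp_le_exp.mpr (neg_le_neg (sol_upper hd hgb hgm hgi hx))
    have hkey : x ^ d + Ac d g * x ^ (d - 1) + Bc d g ≤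
        (x+t) ^ d - (d * Mc d f) * (x+t) ^ (d - 1) := by
      have := key_arith hd hKf hx ht0 h1a h1b
      linarith
    exact le_trans hup (le_trans (Real.exp_le_exp.mpr (neg_le_neg hkey)) hlo)
  · rcases le_or_gt (-τ) x with hx2 | hx2
    · -- region -τ ≤ x < 0
      have h1 : f (x + t) ≤ f (t - τ) := hfa (by linarith)
      have hsd : f (t - τ) ≤ Real.exp (-(f 0 * (t - τ) ^ d)) :=
        sol_decay hd hfb hfi hfe hfa (by linarith : (0:ℝ) ≤ t - τ)
      have h3 : g 0 ≤ g x := hga (by linarith)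
      exact le_trans h1 (le_trans hsd (le_trans h2 h3))
    · -- region x < -τ : tail comparison
      have hsτ : τ < -x := by linarith
      have hs0 : (0:ℝ) ≤ -x := by linarith
      have hs₁s : s₁ ≤ -x := le_trans hτs₁ hsτ.le
      -- 1 - g x ≤ Γ exp(-φ_g(-x))
      have hgs : 1 - g x ≤
          (d * Gc d) * Real.exp (-((-x) ^ d - (d * Mc d g) * (-x) ^ (d - 1))) := by
        have hIoi : Ioi (- x) = Ioi (-x) := rfl
        have hE1 : 1 - g x ≤ d * ∫ y in Ioi (-x), (x + y) ^ (d - 1) * g y := by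
          rw [hge x]
          have := Real.add_one_le_exp (-(d * ∫ y in Ioi (-x), (x + y) ^ (d - 1) * g y))
          linarith
        have hE2' : d * ∫ y in Ioi (-x), (x + y) ^ (d - 1) * g y ≤
            (d * Gc d) * Real.exp (-((-x) ^ d - (d * Mc d g) * (-x) ^ (d - 1))) := by
          have := sol_S5 hd hgb hgm hgi hge hga hs₁1 hpsig hs₁s
          have hco : ∫ y in Ioi (-x), (-(-x) + y) ^ (d - 1) * g y =
              ∫ y in Ioi (-x), (x + y) ^ (d - 1) * g y := by
            apply setIntegral_congr_fun measurableSet_Ioi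
            intro y _
            norm_num
          rw [hco] at this
          exact this
        linarith
      -- S4 for f at σ = -x - t
      have hS4 := sol_S4 hd hfb hfi hfe hfa (-x - t)
      set a : ℝ := max (-x - t) 0 + 2 with hadef
      have ha0 : (0:ℝ) ≤ a := by
        have := le_max_right (-x - t) (0:ℝ)
        linarith
      have hfa2 : f a ≤ f (-x - t + 2) := hfa (by
        have := le_max_left (-x - t) (0:ℝ)
        linarith)
      have hflow : Real.exp (-(a ^ d + Ac d f * a ^ (d-1) + Bc d f)) ≤ f a := by
        rw [hfe a]
        exact Real.exp_le_exp.mpr (neg_le_neg (sol_upper hd hfb hfm hfi ha0))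
      have hstar : (d * Gc d) * Real.exp (-((-x) ^ d - (d * Mc d g) * (-x) ^ (d - 1))) ≤
          Real.exp (-1) * Real.exp (-(a ^ d + Ac d f * a ^ (d-1) + Bc d f)) := by
        rcases le_or_gt (-x - t) 0 with hσ | hσ
        · have haa : a = 2 := by rw [hadef, max_eq_right hσ]; ring
          rw [haa]
          exact hτprop (-x) hsτ.le
        · have hb0 : (0:ℝ) ≤ t - 2 := by linarith
          have hsab : -x = a + (t - 2) := by
            rw [hadef, max_eq_left hσ.le]; ring
          have hexp : (a ^ d + Ac d f * a ^ (d-1) + Bc d f) + 1 + d * Gc d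
              + (d * Mc d g) * (-x) ^ (d-1) ≤ (-x) ^ d := by
            rw [hsab]
            have := key_arith hd hKg ha0 hb0 h3a h3b
            linarith
          have hΓexp : d * Gc d ≤ Real.exp (d * Gc d) := by
            have := Real.add_one_le_exp (d * Gc d); linarith
          calc (d * Gc d) * Real.exp (-((-x) ^ d - (d * Mc d g) * (-x) ^ (d - 1))) ≤
              Real.exp (d * Gc d) * Real.exp (-((-x) ^ d - (d * Mc d g) * (-x) ^ (d - 1))) :=
                mul_le_mul_of_nonneg_right hΓexp (Real.exp_nonneg _)
            _ = Real.exp (d * Gc d + -((-x) ^ d - (d * Mc d g) * (-x) ^ (d - 1))) := by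
                rw [← Real.exp_add]
            _ ≤ Real.exp (-1 + -(a ^ d + Ac d f * a ^ (d-1) + Bc d f)) := by
                apply Real.exp_le_exp.mpr
                linarith
            _ = Real.exp (-1) * Real.exp (-(a ^ d + Ac d f * a ^ (d-1) + Bc d f)) := by
                rw [← Real.exp_add]
      have hmid : Real.exp (-1) * Real.exp (-(a ^ d + Ac d f * a ^ (d-1) + Bc d f)) ≤
          Real.exp (-1) * f (-x - t + 2) :=
        mul_le_mul_of_nonneg_left (le_trans hflow hfa2) (Real.exp_nonneg _)
      have hfin : 1 - g x ≤ 1 - f (-(-x - t)) :=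
        le_trans hgs (le_trans hstar (le_trans hmid hS4))
      have hxe : -(-x - t) = x + t := by ring
      rw [hxe] at hfin
      linarith

lemma shift_flip (hd : 1 < d) {f g : ℝ → ℝ} {t : ℝ}
    (hfi : ∀ x : ℝ, IntegrableOn (fun y => (x + y) ^ (d - 1) * f y) (Ioi (-x)))
    (hfe : ∀ x : ℝ, f x = Real.exp (-(d * ∫ y in Ioi (-x), (x + y) ^ (d - 1) * f y)))
    (hgi : ∀ x : ℝ, IntegrableOn (fun y => (x + y) ^ (d - 1) * g y) (Ioi (-x)))
    (hge : ∀ x : ℝ, g x = Real.exp (-(d * ∫ y in Ioi (-x), (x + y) ^ (d - 1) * g y)))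
    (hP : ∀ x : ℝ, f (x + t) ≤ g x) (hf0 : ∀ x, 0 ≤ f x) (x : ℝ) :
    g x ≤ f (x - t) := by
  have hd0 : (0:ℝ) < d := by linarith
  set H : ℝ → ℝ := fun z => (x - t + z) ^ (d - 1) * f z with hH
  have hHint : IntegrableOn H (Ioi (-x + t)) := by
    have := hfi (x - t)
    have he : -(x - t) = -x + t := by ring
    rwa [he] at this
  have htr : IntegrableOn (fun y => H (y + t)) (Ioi (-x)) := by
    apply shift_integrableOn
    exact hHint
  have htr' : IntegrableOn (fun y => (x + y) ^ (d - 1) * f (y + t)) (Ioi (-x)) := by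
    apply htr.congr_fun _ measurableSet_Ioi
    intro y _
    rw [hH]
    simp only []
    rw [show x - t + (y + t) = x + y by ring]
  have hmono : ∫ y in Ioi (-x), (x + y) ^ (d - 1) * f (y + t) ≤
      ∫ y in Ioi (-x), (x + y) ^ (d - 1) * g y := by
    apply setIntegral_mono_on htr' (hgi x) measurableSet_Ioi
    intro y hy
    have hy0 : -x < y := hy
    exact mul_le_mul_of_nonneg_left (hP y) (Real.rpow_nonneg (by linarith) _)
  have hval : ∫ y in Ioi (-x), (x + y) ^ (d - 1) * f (y + t) =
      ∫ z in Ioi (-(x - t)), (x - t + z) ^ (d - 1) * f z := by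
    have h1 : ∫ y in Ioi (-x), (x + y) ^ (d - 1) * f (y + t) = ∫ y in Ioi (-x), H (y + t) := by
      apply setIntegral_congr_fun measurableSet_Ioi
      intro y _
      rw [hH]
      simp only []
      rw [show x - t + (y + t) = x + y by ring]
    have h2 : ∫ y in Ioi (-x), H (y + t) = ∫ z in Ioi (-x + t), H z :=
      shift_setIntegral H (-x) t
    rw [h1, h2]
    have he : -(x - t) = -x + t := by ring
    rw [he]
  rw [hge x, hfe (x - t)]
  apply Real.exp_le_exp.mpr
  apply neg_le_neg
  apply mul_le_mul_of_nonneg_left _ hd0.le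
  rw [← hval]
  exact hmono

end Sol
end CavitySol

/-- any two non-increasing solutions are sandwiched by shifts of
one another. -/
theorem cavity_solutions_shift_sandwich (d : ℝ) (hd : 1 < d)
    (f g : ℝ → ℝ) (hf_anti : Antitone f) (hg_anti : Antitone g)
    (hf : SolvesCavity d f) (hg : SolvesCavity d g) :
    ∃ t : ℝ, 0 ≤ t ∧ ∀ x : ℝ, f (x + t) ≤ g x ∧ g x ≤ f (x - t) := by
  obtain ⟨hfm, hfb, hfi, hfe⟩ := hf
  obtain ⟨hgm, hgb, hgi, hge⟩ := hg
  obtain ⟨t, ht0, hP⟩ := CavitySol.exists_shift_le hd hfm hfb hfi hfe hf_anti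
    hgm hgb hgi hge hg_anti
  exact ⟨t, ht0, fun x => ⟨hP x,
    CavitySol.shift_flip hd hfi hfe hgi hge hP (fun x => (hfb x).1) x⟩⟩
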